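/- For any positive integer w, any x ∈ R, and any n ≥ 0: w · B_{n,q}(w·x) = Σ_{k=0}^n C(n,k) · B_{k,q^w}(x) · S_{n−k,q}(w − 1) · w^k. -/

import Mathlib

open Finset

/-- The q-analogue of power sums: `S_{k,q}(m) = Σ_{i=0}^m i^k q^i` (with `0^0 = 1`). -/
def qS {R : Type*} [CommRing R] (q : R) (k m : ℕ) : R :=
  ∑ i ∈ Finset.range (m + 1), (i : R) ^ k * q ^ i

/-- q-Bernoulli numbers `b_n(q, L)`: `(q-1) b_0 = L` and for `n ≥ 1`,
`(q-1) b_n = [n = 1] - q Σ_{k<n} C(n,k) b_k`. -/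
noncomputable def qb {R : Type*} [CommRing R] (q L : R) : ℕ → R
  | 0 => Ring.inverse (q - 1) * L
  | n + 1 =>
      Ring.inverse (q - 1) *
        ((if n + 1 = 1 then (1 : R) else 0) -
          q * ∑ k ∈ (Finset.range (n + 1)).attach,
              ((n + 1).choose k.1 : R) * qb q L k.1)
  termination_by n => n
  decreasing_by exact Finset.mem_range.mp k.2

/-- q-Bernoulli polynomials `B_{n,q}(x) = Σ_{k=0}^n C(n,k) b_k(q,L) x^{n-k}`. -/
noncomputable def qB {R : Type*} [CommRing R] (q L : R) (n : ℕ) (x : R) : R :=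
  ∑ k ∈ Finset.range (n + 1), (n.choose k : R) * qb q L k * x ^ (n - k)

namespace QBernoulliAux

open PowerSeries Nat

variable {R : Type*} [CommRing R] [Algebra ℚ R]

/-- `n`-th Taylor coefficient times `n!`. -/
noncomputable def cf (n : ℕ) (p : R⟦X⟧) : R := (n ! : ℚ) • coeff n p

lemma cf_ext {p r : R⟦X⟧} (h : ∀ n, cf n p = cf n r) : p = r := by
  ext n
  have h2 := h n
  unfold cf at h2
  have hf : ((n ! : ℚ)) ≠ 0 := by exact_mod_cast Nat.factorial_ne_zero n
  have := congrArg (fun z => (n ! : ℚ)⁻¹ • z) h2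
  simpa [smul_smul, inv_mul_cancel₀ hf] using this

lemma cf_sub (n : ℕ) (p r : R⟦X⟧) : cf n (p - r) = cf n p - cf n r := by
  simp [cf, smul_sub]

lemma cf_add (n : ℕ) (p r : R⟦X⟧) : cf n (p + r) = cf n p + cf n r := by
  simp [cf, smul_add]

lemma cf_C_mul (n : ℕ) (a : R) (p : R⟦X⟧) : cf n (C a * p) = a * cf n p := by
  simp [cf, coeff_C_mul, mul_smul_comm]

lemma cf_exp (n : ℕ) : cf n (exp R) = 1 := by
  have hf : ((n ! : ℚ)) ≠ 0 := by exact_mod_cast Nat.factorial_ne_zero n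
  rw [cf, coeff_exp, Algebra.smul_def, ← map_mul]
  rw [show (n ! : ℚ) * (1 / n !) = 1 by field_simp, map_one]

lemma cf_rescale (n : ℕ) (a : R) (p : R⟦X⟧) : cf n (rescale a p) = a ^ n * cf n p := by
  simp [cf, coeff_rescale, mul_smul_comm]

lemma cf_mul (n : ℕ) (p r : R⟦X⟧) :
    cf n (p * r) = ∑ k ∈ Finset.range (n + 1),
      (n.choose k : R) * cf k p * cf (n - k) r := by
  rw [cf, coeff_mul, Finset.Nat.sum_antidiagonal_eq_sum_range_succ_mk, smul_sum]
  refine Finset.sum_congr rfl fun k hk => ?_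
  have hk' : k ≤ n := Finset.mem_range_succ_iff.mp hk
  have hfac : (n ! : ℚ) = (n.choose k : ℚ) * (k ! : ℚ) * ((n - k)! : ℚ) := by
    exact_mod_cast (Nat.choose_mul_factorial_mul_factorial hk').symm
  show (n ! : ℚ) • (coeff k p * coeff (n - k) r) = _
  rw [hfac, cf, cf]
  simp only [Algebra.smul_def, map_mul, map_natCast]
  ring

/-- The exponential generating function of the q-Bernoulli numbers. -/
noncomputable def qF (q L : R) : R⟦X⟧ := PowerSeries.mk fun n => (n ! : ℚ)⁻¹ • qb q L n

lemma cf_qF (q L : R) (n : ℕ) : cf n (qF q L) = qb q L n := by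
  have hf : ((n ! : ℚ)) ≠ 0 := by exact_mod_cast Nat.factorial_ne_zero n
  simp [cf, qF, coeff_mk, smul_smul, mul_inv_cancel₀ hf]

lemma qb_succ (q L : R) (n : ℕ) :
    qb q L (n + 1) = Ring.inverse (q - 1) *
      ((if n + 1 = 1 then (1 : R) else 0) -
        q * ∑ k ∈ Finset.range (n + 1), ((n + 1).choose k : R) * qb q L k) := by
  rw [qb, Finset.sum_attach (Finset.range (n + 1)) (fun i => ((n + 1).choose i : R) * qb q L i)]

lemma sum_reflect_choose (f g : ℕ → R) (n : ℕ) :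
    ∑ k ∈ Finset.range (n + 1), (n.choose k : R) * f k * g (n - k)
      = ∑ k ∈ Finset.range (n + 1), (n.choose k : R) * f (n - k) * g k := by
  rw [← Finset.sum_range_reflect (fun k => (n.choose k : R) * f (n - k) * g k) (n + 1)]
  refine Finset.sum_congr rfl fun k hk => ?_
  have hk' : k ≤ n := Finset.mem_range_succ_iff.mp hk
  simp only [Nat.add_sub_cancel]
  rw [Nat.sub_sub_self hk', Nat.choose_symm hk']

lemma key_rec (q L : R) (hu : IsUnit (q - 1)) :
    (C q * exp R - 1) * qF q L = C L + X := by
  refine cf_ext fun n => ?_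
  have hL : (C q * exp R - 1) * qF q L
      = C q * (exp R * qF q L) - qF q L := by ring
  rw [hL, cf_sub, cf_C_mul, cf_mul, cf_qF]
  have hsum : ∀ m : ℕ, (∑ k ∈ Finset.range (m + 1),
      (m.choose k : R) * cf k (exp R) * cf (m - k) (qF q L))
      = ∑ k ∈ Finset.range (m + 1), (m.choose k : R) * qb q L k := by
    intro m
    rw [show (∑ k ∈ Finset.range (m + 1),
        (m.choose k : R) * cf k (exp R) * cf (m - k) (qF q L))
        = ∑ k ∈ Finset.range (m + 1),
          (m.choose k : R) * (1 : R) * qb q L (m - k) by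
      exact Finset.sum_congr rfl fun k _ => by rw [cf_exp, cf_qF]]
    rw [sum_reflect_choose]
    exact Finset.sum_congr rfl fun k _ => by ring
  rw [hsum]
  cases n with
  | zero =>
      simp only [zero_add, Finset.sum_range_one, Nat.choose_self, Nat.cast_one, one_mul]
      have h0 : qb q L 0 = Ring.inverse (q - 1) * L := by rw [qb]
      have : (q - 1) * qb q L 0 = L := by
        rw [h0, ← mul_assoc, Ring.mul_inverse_cancel _ hu, one_mul]
      have hR : cf 0 (C L + X) = L := by
        simp [cf, coeff_C, coeff_X]
      rw [hR]
      linear_combination this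
  | succ m =>
      rw [Finset.sum_range_succ, Nat.choose_self, Nat.cast_one, one_mul]
      have h1 : (q - 1) * qb q L (m + 1)
          = (if m + 1 = 1 then (1 : R) else 0)
            - q * ∑ k ∈ Finset.range (m + 1), ((m + 1).choose k : R) * qb q L k := by
        rw [qb_succ, ← mul_assoc, Ring.mul_inverse_cancel _ hu, one_mul]
      have hR : cf (m + 1) (C L + X) = (if m + 1 = 1 then (1 : R) else 0) := by
        by_cases h : m + 1 = 1
        · have hm : m = 0 := by omega
          subst hm
          simp [cf, coeff_C, coeff_X]
        · simp [cf, coeff_C, coeff_X, h, Nat.succ_ne_zero, show m ≠ 0 by omega]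
      rw [hR]
      linear_combination h1

lemma rescale_C' (a r : R) : rescale a (C r) = C r := by
  ext n
  simp only [coeff_rescale, coeff_C]
  split
  · next h => simp [h]
  · simp

lemma rescale_X' (a : R) : rescale a (X : R⟦X⟧) = C a * X := by
  ext n
  simp only [coeff_rescale, coeff_X, coeff_C_mul]
  split
  · next h => simp [h]
  · simp

lemma telescope (q : R) (w : ℕ) :
    (C q * exp R - 1) * (∑ i ∈ Finset.range w, C (q ^ i) * rescale (i : R) (exp R))
      = C (q ^ w) * rescale (w : R) (exp R) - 1 := by
  have e1 : rescale (1 : R) (exp R) = exp R := by rw [rescale_one]; rfl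
  have hterm : ∀ i : ℕ,
      (C q * exp R - 1) * (C (q ^ i) * rescale (i : R) (exp R))
        = C (q ^ (i + 1)) * rescale ((i + 1 : ℕ) : R) (exp R)
          - C (q ^ i) * rescale (i : R) (exp R) := by
    intro i
    have h2 : rescale (((i + 1 : ℕ)) : R) (exp R)
        = rescale (1 : R) (exp R) * rescale (i : R) (exp R) := by
      rw [exp_mul_exp_eq_exp_add]
      congr 1
      push_cast
      ring
    rw [h2, e1, pow_succ, map_mul]
    ring
  rw [mul_sum]
  rw [Finset.sum_congr rfl fun i _ => hterm i]
  rw [Finset.sum_range_sub (fun i => C (q ^ i) * rescale ((i : ℕ) : R) (exp R)) w]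
  have h0 : rescale ((0 : ℕ) : R) (exp R) = 1 := by
    simp [rescale_zero, constantCoeff_exp]
  rw [h0]
  simp

lemma key_PS (q L : R) (hq : ∀ w : ℕ, 0 < w → IsUnit (q ^ w - 1)) (w : ℕ) (hw : 0 < w) :
    C ((w : R)) * qF q L
      = rescale (w : R) (qF (q ^ w) ((w : R) * L))
          * ∑ i ∈ Finset.range w, C (q ^ i) * rescale (i : R) (exp R) := by
  have hu1 : IsUnit (q - 1) := by simpa using hq 1 one_pos
  have huw : IsUnit (q ^ w - 1) := hq w hw
  have hA := key_rec q L hu1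
  have hA' := key_rec (q ^ w) ((w : R) * L) huw
  have hU : IsUnit (C q * exp R - 1) := by
    rw [isUnit_iff_constantCoeff]
    simpa [constantCoeff_exp] using hu1
  refine hU.mul_left_cancel ?_
  calc (C q * exp R - 1) * (C ((w : R)) * qF q L)
      = C ((w : R)) * ((C q * exp R - 1) * qF q L) := by ring
    _ = C ((w : R)) * (C L + X) := by rw [hA]
    _ = (C q * exp R - 1) * (rescale (w : R) (qF (q ^ w) ((w : R) * L))
          * ∑ i ∈ Finset.range w, C (q ^ i) * rescale (i : R) (exp R)) := by
        have hres : rescale (w : R) ((C (q ^ w) * exp R - 1) * qF (q ^ w) ((w : R) * L))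
            = rescale (w : R) (C ((w : R) * L) + X) := by rw [hA']
        rw [map_mul, map_sub, map_mul, map_one, rescale_C', map_add, rescale_C',
          rescale_X'] at hres
        have : (C q * exp R - 1) * (rescale (w : R) (qF (q ^ w) ((w : R) * L))
            * ∑ i ∈ Finset.range w, C (q ^ i) * rescale (i : R) (exp R))
            = rescale (w : R) (qF (q ^ w) ((w : R) * L))
              * ((C q * exp R - 1)
                * ∑ i ∈ Finset.range w, C (q ^ i) * rescale (i : R) (exp R)) := by ring
        rw [this, telescope]
        rw [show C ((w : R) * L) = C ((w : R)) * C L from map_mul _ _ _] at hres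
        linear_combination -hres

lemma cf_qB (q L y : R) (n : ℕ) :
    cf n (rescale y (exp R) * qF q L) = qB q L n y := by
  rw [cf_mul]
  unfold qB
  rw [show (∑ k ∈ Finset.range (n + 1),
      (n.choose k : R) * cf k (rescale y (exp R)) * cf (n - k) (qF q L))
      = ∑ k ∈ Finset.range (n + 1), (n.choose k : R) * y ^ k * qb q L (n - k) by
    exact Finset.sum_congr rfl fun k _ => by rw [cf_rescale, cf_exp, cf_qF, mul_one]]
  rw [sum_reflect_choose]
  exact Finset.sum_congr rfl fun k _ => by ring

lemma cf_sum {ι : Type*} (s : Finset ι) (f : ι → R⟦X⟧) (n : ℕ) :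
    cf n (∑ i ∈ s, f i) = ∑ i ∈ s, cf n (f i) := by
  simp [cf, smul_sum]

lemma cf_g (q : R) (w : ℕ) (hw : 0 < w) (m : ℕ) :
    cf m (∑ i ∈ Finset.range w, C (q ^ i) * rescale (i : R) (exp R))
      = qS q m (w - 1) := by
  rw [cf_sum]
  unfold qS
  rw [show w - 1 + 1 = w from by omega]
  refine Finset.sum_congr rfl fun i _ => ?_
  rw [cf_C_mul, cf_rescale, cf_exp]
  ring

end QBernoulliAux

open QBernoulliAux PowerSeries in
theorem qBernoulli_power_sum_formula {R : Type*} [CommRing R] [Algebra ℚ R] (q L : R)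
    (hq : ∀ w : ℕ, 0 < w → IsUnit (q ^ w - 1)) (w : ℕ) (hw : 0 < w) (x : R) (n : ℕ) :
    (w : R) * qB q L n ((w : R) * x)
      = ∑ k ∈ Finset.range (n + 1), (n.choose k : R) * qB (q ^ w) ((w : R) * L) k x *
          qS q (n - k) (w - 1) * (w : R) ^ k := by
  have hL : (w : R) * qB q L n ((w : R) * x)
      = cf n (rescale ((w : R) * x) (exp R) * (C ((w : R)) * qF q L)) := by
    rw [show rescale ((w : R) * x) (exp R) * (C ((w : R)) * qF q L)
        = C ((w : R)) * (rescale ((w : R) * x) (exp R) * qF q L) by ring]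
    rw [cf_C_mul, cf_qB]
  rw [hL, key_PS q L hq w hw]
  have hres : rescale ((w : R) * x) (exp R)
      = rescale ((w : R)) (rescale x (exp R)) := by
    rw [rescale_rescale]
    ring_nf
  rw [show rescale ((w : R) * x) (exp R)
        * (rescale (w : R) (qF (q ^ w) ((w : R) * L))
          * ∑ i ∈ Finset.range w, C (q ^ i) * rescale (i : R) (exp R))
      = (rescale ((w : R)) (rescale x (exp R) * qF (q ^ w) ((w : R) * L)))
          * ∑ i ∈ Finset.range w, C (q ^ i) * rescale (i : R) (exp R) by
    rw [map_mul, hres]; ring]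
  rw [cf_mul]
  refine Finset.sum_congr rfl fun k hk => ?_
  rw [cf_rescale, cf_qB, cf_g q w hw]
  ring
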